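/- For every m, n ∈ ℕ with m < 2^n and every x ∈ G, the Walsh–Dirichlet kernel admits the representation D_m(x) = ∑_{k=0}^{n-1} 𝟙_{I_k \ I_{k+1}}(x) ∑_{j=0}^{k} ε_{kj} 2^{j-1} w_m(x + e_j) − (1/2) w_m(x) + (m + 1/2) 𝟙_{I_n}(x), where ε_{kj} = −1 for 0 ≤ j ≤ k−1 and ε_{kk} = +1. -/

import Mathlib

open MeasureTheory Finset ENNReal

noncomputable section

/-- The Walsh (dyadic) group: countable product of `ZMod 2`. -/
abbrev G := ℕ → ZMod 2

instance : MeasurableSpace (ZMod 2) := ⊤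

/-- The dyadic interval `I_n` of rank `n` at `0`. -/
def In (n : ℕ) : Set G := {y : G | ∀ i < n, y i = 0}

/-- `e_j`: the element whose `j`-th coordinate is `1`, all others `0`. -/
def ej (j : ℕ) : G := fun i => if i = j then 1 else 0

/-- The Walsh–Paley function `w_n`. -/
def walsh (n : ℕ) (x : G) : ℝ :=
  (-1 : ℝ) ^ (∑ k ∈ Finset.range n, if n.testBit k then (x k).val else 0)

/-- The Walsh–Dirichlet kernel `D_n`. -/
def Dker (n : ℕ) (x : G) : ℝ := ∑ k ∈ Finset.range n, walsh k x

/-- `μ` is the (normalized) Haar measure of `G`. -/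
def IsHaar (μ : Measure G) : Prop :=
  IsProbabilityMeasure μ ∧ ∀ a : G, MeasurePreserving (fun y => a + y) μ μ

/-- `log⁺`. -/
def logp (u : ℝ) : ℝ := if 1 < u then Real.log u else 0

/-- The `L log⁺ L` integral of a two-variable function. -/
def LlogL (μ : Measure G) (f : G × G → ℝ) : ℝ≥0∞ :=
  ∫⁻ p, ENNReal.ofReal (|f p| * logp |f p|) ∂(μ.prod μ)

/-- Walsh–Fourier coefficient of a two-variable function. -/
def fhat (μ : Measure G) (f : G × G → ℝ) (i j : ℕ) : ℝ :=
  ∫ p, f p * walsh i p.1 * walsh j p.2 ∂(μ.prod μ)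

/-- Rectangular partial sum `S_{M,N} f`. -/
def SMN (μ : Measure G) (M N : ℕ) (f : G × G → ℝ) (x y : G) : ℝ :=
  ∑ i ∈ Finset.range M, ∑ j ∈ Finset.range N, fhat μ f i j * walsh i x * walsh j y

/-- One-dimensional `2^n`-th partial sum (conditional expectation form). -/
def S2 (μ : Measure G) (n : ℕ) (f : G → ℝ) (x : G) : ℝ :=
  2 ^ n * ∫ t in In n, f (x + t) ∂μ

/-- Schipp's operator `V_n`. -/
def Vop (μ : Measure G) (n : ℕ) (f : G → ℝ) (x : G) : ℝ :=
  ((1 / 2 ^ n) * ∫ t, (∑ j ∈ Finset.range n,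
      2 ^ j / 2 * Set.indicator (In j) (fun _ => (1 : ℝ)) t * S2 μ n f (x + t + ej j)) ^ 2 ∂μ)
    ^ (1/2 : ℝ)

/-- `S^{(1)}_{2^n}`: partial sum in the first variable. -/
def S1 (μ : Measure G) (n : ℕ) (f : G × G → ℝ) (x y : G) : ℝ :=
  2 ^ n * ∫ s in In n, f (x + s, y) ∂μ

/-- `S^{(2)}_{2^n}`: partial sum in the second variable. -/
def S2' (μ : Measure G) (n : ℕ) (f : G × G → ℝ) (x y : G) : ℝ :=
  2 ^ n * ∫ t in In n, f (x, y + t) ∂μ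

/-- `V_1` of the paper (with index `n`). -/
def V1 (μ : Measure G) (n : ℕ) (f : G × G → ℝ) (x y : G) : ℝ :=
  ((1 / 2 ^ n) * ∫ t, (∑ j ∈ Finset.range n,
      2 ^ j / 2 * Set.indicator (In j) (fun _ => (1 : ℝ)) t * S1 μ n f (x + t + ej j) y) ^ 2 ∂μ)
    ^ (1/2 : ℝ)

/-- `V_2` of the paper (with index `n`). -/
def V2 (μ : Measure G) (n : ℕ) (f : G × G → ℝ) (x y : G) : ℝ :=
  ((1 / 2 ^ n) * ∫ t, (∑ j ∈ Finset.range n,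
      2 ^ j / 2 * Set.indicator (In j) (fun _ => (1 : ℝ)) t * S2' μ n f x (y + t + ej j)) ^ 2 ∂μ)
    ^ (1/2 : ℝ)

/-- Hybrid maximal function in the first variable (`ℝ≥0∞`-valued). -/
def M1e (μ : Measure G) (f : G × G → ℝ) (p : G × G) : ℝ≥0∞ :=
  ⨆ n : ℕ, ENNReal.ofReal (2 ^ n * ∫ s in In n, |f (p.1 + s, p.2)| ∂μ)

/-- Hybrid maximal function in the second variable (`ℝ≥0∞`-valued). -/
def M2e (μ : Measure G) (f : G × G → ℝ) (p : G × G) : ℝ≥0∞ :=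
  ⨆ n : ℕ, ENNReal.ofReal (2 ^ n * ∫ t in In n, |f (p.1, p.2 + t)| ∂μ)

/-- Two-dimensional dyadic maximal function (`ℝ≥0∞`-valued). -/
def Me (μ : Measure G) (f : G × G → ℝ) (p : G × G) : ℝ≥0∞ :=
  ⨆ n : ℕ, ENNReal.ofReal (2 ^ (2*n) *
    |∫ q in (In n) ×ˢ (In n), f (p.1 + q.1, p.2 + q.2) ∂(μ.prod μ)|)

/-- The diagonal maximal function `A` of the paper (`ℝ≥0∞`-valued). -/
def Ae (μ : Measure G) (f : G × G → ℝ) (p : G × G) : ℝ≥0∞ :=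
  ⨆ j : ℕ, ENNReal.ofReal (2 ^ j * ∫ s in In j, |f (p.1 + s, p.2 + s)| ∂μ)

/-- `ℝ≥0∞`-valued partial sum in the first variable. -/
def S1e (μ : Measure G) (n : ℕ) (h : G × G → ℝ≥0∞) (x y : G) : ℝ≥0∞ :=
  2 ^ n * ∫⁻ s in In n, h (x + s, y) ∂μ

/-- `ℝ≥0∞`-valued partial sum in the second variable. -/
def S2e (μ : Measure G) (n : ℕ) (h : G × G → ℝ≥0∞) (x y : G) : ℝ≥0∞ :=
  2 ^ n * ∫⁻ t in In n, h (x, y + t) ∂μ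

/-- `ℝ≥0∞`-valued maximal operator `V_1`. -/
def V1e (μ : Measure G) (h : G × G → ℝ≥0∞) (x y : G) : ℝ≥0∞ :=
  ⨆ n : ℕ, ((1 / 2 ^ n) * ∫⁻ t, (∑ j ∈ Finset.range n,
      2 ^ j / 2 * Set.indicator (In j) (fun _ => (1 : ℝ≥0∞)) t * S1e μ n h (x + t + ej j) y) ^ 2 ∂μ)
    ^ (1/2 : ℝ)

/-- `ℝ≥0∞`-valued maximal operator `V_2`. -/
def V2e (μ : Measure G) (h : G × G → ℝ≥0∞) (x y : G) : ℝ≥0∞ :=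
  ⨆ n : ℕ, ((1 / 2 ^ n) * ∫⁻ t, (∑ j ∈ Finset.range n,
      2 ^ j / 2 * Set.indicator (In j) (fun _ => (1 : ℝ≥0∞)) t * S2e μ n h x (y + t + ej j)) ^ 2 ∂μ)
    ^ (1/2 : ℝ)

/-- The strong mean `H^p_n f`. -/
def Hp (μ : Measure G) (p : ℝ) (n : ℕ) (f : G × G → ℝ) (x y : G) : ℝ :=
  ((1 / 2 ^ n) * ∑ m ∈ Finset.range (2 ^ n), |SMN μ m m f x y| ^ p) ^ (1 / p)

/-- Auxiliary lemmas for the Schipp representation. -/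

lemma neg_one_pow_congr' {a b : ℕ} (h : a % 2 = b % 2) : ((-1 : ℝ)) ^ a = (-1) ^ b := by
  rw [neg_one_pow_eq_pow_mod_two, h, ← neg_one_pow_eq_pow_mod_two]

lemma walsh_eq_of_le (n N : ℕ) (hN : n ≤ N) (x : G) :
    walsh n x = (-1 : ℝ) ^ (∑ k ∈ Finset.range N, if n.testBit k then (x k).val else 0) := by
  unfold walsh
  congr 1
  refine Finset.sum_subset (Finset.range_subset_range.2 hN) ?_
  intro k hk hk'
  have hnk : n ≤ k := Nat.le_of_not_lt (fun hc => hk' (Finset.mem_range.2 hc))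
  have h2 : n < 2 ^ k := lt_of_le_of_lt hnk (Nat.lt_two_pow_self (n := k))
  simp [Nat.testBit_lt_two_pow h2]

lemma walsh_add' (n : ℕ) (x y : G) : walsh n (x + y) = walsh n x * walsh n y := by
  unfold walsh
  rw [← pow_add]
  apply neg_one_pow_congr'
  rw [← Finset.sum_add_distrib]
  conv_lhs => rw [Finset.sum_nat_mod]
  conv_rhs => rw [Finset.sum_nat_mod]
  congr 1
  apply Finset.sum_congr rfl
  intro k _
  have key : ∀ a b : ZMod 2, (a + b).val % 2 = (a.val + b.val) % 2 := by decide
  by_cases h : n.testBit k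
  · simp only [h, if_true, Pi.add_apply]
    exact key _ _
  · simp [h]

lemma walsh_ej' (m j : ℕ) : walsh m (ej j) = if m.testBit j then -1 else 1 := by
  unfold walsh
  have hval : ∀ k, ((ej j k).val) = if k = j then 1 else 0 := by
    intro k; unfold ej
    by_cases h : k = j
    · rw [if_pos h, if_pos h]
      decide
    · rw [if_neg h, if_neg h]
      decide
  by_cases hb : m.testBit j
  · have hj : j < m := lt_of_lt_of_le (Nat.lt_two_pow_self (n := j)) (Nat.ge_two_pow_of_testBit hb)
    have hsum : (∑ k ∈ Finset.range m, if m.testBit k then (ej j k).val else 0) = 1 := by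
      rw [Finset.sum_eq_single j]
      · simp [hb, hval]
      · intro k _ hk
        by_cases h : m.testBit k <;> simp [h, hval, hk]
      · intro h; exact absurd (Finset.mem_range.2 hj) h
    rw [hsum]; simp [hb]
  · have hsum : (∑ k ∈ Finset.range m, if m.testBit k then (ej j k).val else 0) = 0 := by
      apply Finset.sum_eq_zero
      intro k _
      by_cases h : m.testBit k
      · have hkj : k ≠ j := by rintro rfl; exact hb h
        simp [h, hval, hkj]
      · simp [h]
    rw [hsum]; simp [hb]

lemma walsh_two_pow_add' (t i : ℕ) (hi : i < 2 ^ t) (x : G) :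
    walsh (2 ^ t + i) x = (-1 : ℝ) ^ ((x t).val) * walsh i x := by
  have hti : t < 2 ^ t + i := lt_of_lt_of_le (Nat.lt_two_pow_self (n := t)) (Nat.le_add_right _ _)
  rw [walsh_eq_of_le (2 ^ t + i) (2 ^ t + i) le_rfl,
    walsh_eq_of_le i (2 ^ t + i) (le_of_lt (lt_of_lt_of_le hi (Nat.le_add_right _ _))),
    ← pow_add]
  congr 1
  have key : ∀ k, (if (2 ^ t + i).testBit k then (x k).val else 0) =
      (if k = t then (x t).val else 0) + (if i.testBit k then (x k).val else 0) := by
    intro k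
    rcases lt_trichotomy k t with h | rfl | h
    · rw [Nat.testBit_two_pow_add_gt h]
      simp [Nat.ne_of_lt h]
    · rw [Nat.testBit_two_pow_add_eq, Nat.testBit_lt_two_pow hi]
      simp
    · have hlt : 2 ^ t + i < 2 ^ k := by
        calc 2 ^ t + i < 2 ^ t + 2 ^ t := by omega
        _ = 2 ^ (t + 1) := by ring
        _ ≤ 2 ^ k := Nat.pow_le_pow_right (by norm_num) h
      have h1 : (2 ^ t + i).testBit k = false := Nat.testBit_lt_two_pow hlt
      have h2 : i.testBit k = false :=
        Nat.testBit_lt_two_pow (lt_trans hi (lt_of_le_of_lt (Nat.le_add_right _ _) hlt))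
      simp [h1, h2, Nat.ne_of_gt h]
  rw [Finset.sum_congr rfl (fun k _ => key k), Finset.sum_add_distrib,
    Finset.sum_ite_eq' (Finset.range (2 ^ t + i)) t (fun _ => (x t).val),
    if_pos (Finset.mem_range.2 hti)]

lemma Dker_two_pow_add' (t i : ℕ) (hi : i ≤ 2 ^ t) (x : G) :
    Dker (2 ^ t + i) x = Dker (2 ^ t) x + (-1 : ℝ) ^ ((x t).val) * Dker i x := by
  unfold Dker
  rw [Finset.sum_range_add, Finset.mul_sum]
  congr 1
  apply Finset.sum_congr rfl
  intro k hk
  exact walsh_two_pow_add' t k (lt_of_lt_of_le (Finset.mem_range.1 hk) hi) x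

lemma Dker_two_pow' (t : ℕ) (x : G) :
    Dker (2 ^ t) x = if ∀ i < t, x i = 0 then ((2 : ℝ) ^ t) else 0 := by
  induction t with
  | zero => simp [Dker, walsh]
  | succ t ih =>
    have h2 : (2 : ℕ) ^ (t + 1) = 2 ^ t + 2 ^ t := by ring
    rw [h2, Dker_two_pow_add' t (2 ^ t) le_rfl, ih]
    by_cases h : ∀ i < t, x i = 0
    · rw [if_pos h]
      rcases (by decide : ∀ a : ZMod 2, a = 0 ∨ a = 1) (x t) with h0 | h1
      · have hcond : ∀ i < t + 1, x i = 0 := by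
          intro i hi
          rcases Nat.lt_succ_iff_lt_or_eq.1 hi with h' | rfl
          · exact h i h'
          · exact h0
        rw [if_pos hcond, h0]
        show (2:ℝ) ^ t + (-1) ^ (0 : ZMod 2).val * 2 ^ t = 2 ^ (t + 1)
        norm_num [ZMod.val_zero]
        ring
      · have hcond : ¬ ∀ i < t + 1, x i = 0 := by
          intro hc
          have := hc t (Nat.lt_succ_self t)
          rw [h1] at this
          exact one_ne_zero this
        rw [if_neg hcond, h1]
        have hv1 : ((1 : ZMod 2)).val = 1 := rfl
        show (2:ℝ) ^ t + (-1) ^ (1 : ZMod 2).val * 2 ^ t = 0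
        rw [hv1]
        ring
    · have hcond : ¬ ∀ i < t + 1, x i = 0 :=
        fun hc => h (fun i hi => hc i (lt_trans hi (Nat.lt_succ_self t)))
      rw [if_neg h, if_neg hcond]
      ring

lemma walsh_eq_one_of_lt' {k m : ℕ} {x : G} (hx : ∀ i < k, x i = 0) (hm : m < 2 ^ k) :
    walsh m x = 1 := by
  unfold walsh
  have hsum : (∑ j ∈ Finset.range m, if m.testBit j then (x j).val else 0) = 0 := by
    apply Finset.sum_eq_zero
    intro j _
    by_cases h : m.testBit j
    · have hj : j < k := by
        by_contra hjk
        push_neg at hjk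
        have : m < 2 ^ j := lt_of_lt_of_le hm (Nat.pow_le_pow_right (by norm_num) hjk)
        simp [Nat.testBit_lt_two_pow this] at h
      simp [h, hx j hj]
    · simp [h]
  rw [hsum, pow_zero]

lemma Dker_eq_card' {k m : ℕ} {x : G} (hx : ∀ i < k, x i = 0) (hm : m ≤ 2 ^ k) :
    Dker m x = m := by
  unfold Dker
  rw [Finset.sum_congr rfl
    (fun i hi => walsh_eq_one_of_lt' hx (lt_of_lt_of_le (Finset.mem_range.1 hi) hm))]
  simp

lemma Dker_annulus' {k : ℕ} {x : G} (hx0 : ∀ i < k, x i = 0) (hxk : x k = 1) (m : ℕ) :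
    Dker m x = walsh m x * (((m % 2 ^ k : ℕ) : ℝ) - if m.testBit k then ((2 : ℝ) ^ k) else 0) := by
  induction m using Nat.strong_induction_on with
  | _ m ih =>
  by_cases hsmall : m < 2 ^ k
  · rw [walsh_eq_one_of_lt' hx0 hsmall, Dker_eq_card' hx0 (le_of_lt hsmall),
      Nat.mod_eq_of_lt hsmall, Nat.testBit_lt_two_pow hsmall]
    simp
  push_neg at hsmall
  have hm1 : 1 ≤ m := le_trans Nat.one_le_two_pow hsmall
  obtain ⟨t, h1, h2⟩ : ∃ t, 2 ^ t ≤ m ∧ m < 2 ^ (t + 1) :=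
    ⟨Nat.log 2 m, Nat.pow_log_le_self 2 (by omega), Nat.lt_pow_succ_log_self (by norm_num) m⟩
  have htk : k ≤ t := by
    by_contra hc
    push_neg at hc
    have : m < 2 ^ k := lt_of_lt_of_le h2 (Nat.pow_le_pow_right (by norm_num) hc)
    omega
  have hilt : m - 2 ^ t < 2 ^ t := by
    have hpe : (2 : ℕ) ^ (t + 1) = 2 ^ t + 2 ^ t := by ring
    omega
  have hieq : m = 2 ^ t + (m - 2 ^ t) := by omega
  set i := m - 2 ^ t with hidef
  have him : i < m := by
    have hpos : 0 < 2 ^ t := Nat.pow_pos (by norm_num)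
    omega
  rw [hieq, Dker_two_pow_add' t i (le_of_lt hilt), walsh_two_pow_add' t i hilt, Dker_two_pow']
  rcases eq_or_lt_of_le htk with rfl | hkt
  · rw [if_pos hx0, Dker_eq_card' hx0 (le_of_lt hilt), walsh_eq_one_of_lt' hx0 hilt, hxk]
    have hmod : (2 ^ k + i) % 2 ^ k = i := by
      rw [Nat.add_mod_left, Nat.mod_eq_of_lt hilt]
    have htb : (2 ^ k + i).testBit k = true := by
      rw [Nat.testBit_two_pow_add_eq, Nat.testBit_lt_two_pow hilt]
      rfl
    rw [hmod, htb, if_pos rfl]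
    show (2:ℝ) ^ k + (-1) ^ (1 : ZMod 2).val * (i : ℝ) = (-1) ^ (1 : ZMod 2).val * 1 * ((i : ℝ) - 2 ^ k)
    have hv : ((1 : ZMod 2)).val = 1 := rfl
    rw [hv]
    ring
  · have hnot : ¬ ∀ j < t, x j = 0 := by
      intro hc
      have := hc k hkt
      rw [hxk] at this
      exact one_ne_zero this
    rw [if_neg hnot, ih i him]
    have hsplit : (2 : ℕ) ^ t = 2 ^ k * 2 ^ (t - k) := by
      rw [← pow_add]
      congr 1
      omega
    have hmod : (2 ^ t + i) % 2 ^ k = i % 2 ^ k := by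
      rw [hsplit, Nat.add_comm, Nat.add_mul_mod_self_left]
    have htb : (2 ^ t + i).testBit k = i.testBit k := Nat.testBit_two_pow_add_gt hkt i
    rw [hmod, htb]
    ring

lemma sum_bits' (m k : ℕ) :
    (∑ j ∈ Finset.range k, if m.testBit j then ((2 : ℝ) ^ j) else 0) = ((m % 2 ^ k : ℕ) : ℝ) := by
  induction k with
  | zero => simp [Nat.mod_one]
  | succ k ih =>
    rw [Finset.sum_range_succ, ih, Nat.mod_pow_succ]
    have hiff : m.testBit k = true ↔ m / 2 ^ k % 2 = 1 := by
      rw [Nat.testBit_eq_decide_div_mod_eq]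
      exact decide_eq_true_iff
    by_cases hb : m.testBit k
    · rw [if_pos hb, hiff.1 hb]
      push_cast
      ring
    · have h0 : m / 2 ^ k % 2 = 0 := by
        have hne : m / 2 ^ k % 2 ≠ 1 := fun hc => hb (hiff.2 hc)
        omega
      rw [if_neg hb, h0]
      push_cast
      ring


/-- Schipp's representation of the Dirichlet kernel. -/
theorem dirichlet_schipp_representation (n m : ℕ) (hm : m < 2 ^ n) (x : G) :
    Dker m x =
      (∑ k ∈ Finset.range n, Set.indicator (In k \ In (k+1)) (fun _ => (1 : ℝ)) x *
        ∑ j ∈ Finset.range (k+1),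
          (if j = k then (1 : ℝ) else -1) * (2 ^ j / 2) * walsh m (x + ej j))
      - walsh m x / 2
      + ((m : ℝ) + 1/2) * Set.indicator (In n) (fun _ => (1 : ℝ)) x := by
  by_cases h : ∀ i < n, x i = 0
  · have hin : x ∈ In n := h
    rw [Dker_eq_card' h (le_of_lt hm), walsh_eq_one_of_lt' h hm, Set.indicator_of_mem hin,
      Finset.sum_eq_zero (fun k hk => ?_)]
    · ring
    · have hnot : x ∉ In k \ In (k + 1) := by
        intro hmem
        exact hmem.2 (fun i hi => h i (lt_of_lt_of_le hi (Finset.mem_range.1 hk)))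
      rw [Set.indicator_of_notMem hnot, zero_mul]
  · push_neg at h
    obtain ⟨i0, hi0n, hi0⟩ := h
    have hex : ∃ i, x i ≠ 0 := ⟨i0, hi0⟩
    have hxk' : x (Nat.find hex) ≠ 0 := Nat.find_spec hex
    set k := Nat.find hex with hkdef
    have hx0 : ∀ i < k, x i = 0 := fun i hi => not_not.1 (Nat.find_min hex hi)
    have hkn : k < n := lt_of_le_of_lt (Nat.find_le hi0) hi0n
    have hxk : x k = 1 := by
      rcases (by decide : ∀ a : ZMod 2, a = 0 ∨ a = 1) (x k) with h0 | h1
      · exact absurd h0 hxk'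
      · exact h1
    have hnotInn : x ∉ In n := fun hmem => hxk' (hmem k hkn)
    rw [Set.indicator_of_notMem hnotInn, Dker_annulus' hx0 hxk m]
    rw [Finset.sum_eq_single_of_mem k (Finset.mem_range.2 hkn) (fun b hb hbk => ?_)]
    swap
    · have hnot : x ∉ In b \ In (b + 1) := by
        intro hmem
        rcases lt_or_gt_of_ne hbk with hlt | hgt
        · exact hmem.2 (fun i hi => hx0 i (lt_of_le_of_lt (Nat.lt_succ_iff.1 hi) hlt))
        · exact hxk' (hmem.1 k hgt)
      rw [Set.indicator_of_notMem hnot, zero_mul]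
    have hmemk : x ∈ In k \ In (k + 1) :=
      ⟨fun i hi => hx0 i hi, fun hmem => hxk' (hmem k (Nat.lt_succ_self k))⟩
    rw [Set.indicator_of_mem hmemk, one_mul]
    have hterm : ∀ j ∈ Finset.range (k + 1),
        (if j = k then (1 : ℝ) else -1) * (2 ^ j / 2) * walsh m (x + ej j)
        = walsh m x *
          ((if j = k then (1 : ℝ) else -1) * (2 ^ j / 2) * (if m.testBit j then (-1 : ℝ) else 1)) := by
      intro j _
      rw [walsh_add', walsh_ej']
      ring
    rw [Finset.sum_congr rfl hterm, ← Finset.mul_sum]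
    have hC : (∑ j ∈ Finset.range (k + 1),
        (if j = k then (1 : ℝ) else -1) * (2 ^ j / 2) * (if m.testBit j then (-1 : ℝ) else 1))
        = ((m % 2 ^ k : ℕ) : ℝ) - (if m.testBit k then ((2 : ℝ) ^ k) else 0) + 1 / 2 := by
      rw [Finset.sum_range_succ]
      have hlow : ∀ j ∈ Finset.range k,
          (if j = k then (1 : ℝ) else -1) * (2 ^ j / 2) * (if m.testBit j then (-1 : ℝ) else 1)
          = (if m.testBit j then ((2 : ℝ) ^ j) else 0) - 2 ^ j / 2 := by
        intro j hj
        rw [if_neg (Nat.ne_of_lt (Finset.mem_range.1 hj))]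
        by_cases hb : m.testBit j <;> simp [hb] <;> ring
      rw [Finset.sum_congr rfl hlow, Finset.sum_sub_distrib, sum_bits' m k]
      have hg : (∑ j ∈ Finset.range k, (2 : ℝ) ^ j / 2) = ((2 : ℝ) ^ k - 1) / 2 := by
        rw [← Finset.sum_div, geom_sum_eq (by norm_num : (2:ℝ) ≠ 1) k]
        norm_num
      rw [hg, if_pos rfl]
      by_cases hb : m.testBit k <;> simp [hb] <;> ring
    rw [hC]
    ring
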